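/- The distribution P_𝚫 of the general independent-simplex model 𝚫(n; 𝐩₁,…,𝐩ₙ), with all p_σ ∈ (0,1), is the unique maximizer of entropy among probability distributions P on the set 𝒞_{≤n} of simplicial complexes on at most n labeled vertices, subject to the constraints E_P[a_σ] = E_{P_𝚫}[a_σ] for every nonempty subset σ of {1,…,n} and E_P[b_σ] = E_{P_𝚫}[b_σ] for every subset σ with |σ| ≥ 2. -/

import Mathlib

open Finset

/-- The set `𝒞_{≤n}` of simplicial complexes on at most `n` labeled vertices: downward-closed
families of nonempty subsets of `{1,…,n}` (possibly missing some vertices, possibly empty). -/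
def SComplex (n : ℕ) :=
  {C : Finset (Finset (Fin n)) // ∅ ∉ C ∧ ∀ σ ∈ C, ∀ τ, τ ⊆ σ → τ ≠ ∅ → τ ∈ C}

instance (n : ℕ) : Fintype (SComplex n) := by unfold SComplex; infer_instance

instance (n : ℕ) : DecidableEq (SComplex n) := by unfold SComplex; infer_instance

/-- `a_σ(C)`: indicator that `σ` is a simplex of `C`. -/
def aInd {n : ℕ} (C : SComplex n) (σ : Finset (Fin n)) : ℕ :=
  if σ ∈ C.1 then 1 else 0

/-- `b_σ(C)`: indicator that the entire boundary of `σ` (all facets `σ.erase i`) is in `C`;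
by convention `b_σ = 1` for singletons (whose unique facet is the empty set). -/
def bInd {n : ℕ} (C : SComplex n) (σ : Finset (Fin n)) : ℕ :=
  if ∀ i ∈ σ, σ.erase i = ∅ ∨ σ.erase i ∈ C.1 then 1 else 0

/-- The distribution of the general independent-simplex model `𝚫(n; 𝐩₁,…,𝐩ₙ)`:
`P_𝚫(C) = ∏_σ p_σ^{a_σ(C)} (1-p_σ)^{b_σ(C)-a_σ(C)}` over all nonempty `σ ⊆ {1,…,n}`. -/
def PDelta (n : ℕ) (p : Finset (Fin n) → ℝ) (C : SComplex n) : ℝ :=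
  ∏ σ ∈ (univ : Finset (Finset (Fin n))).filter (fun σ => σ ≠ ∅),
    p σ ^ aInd C σ * (1 - p σ) ^ (bInd C σ - aInd C σ)
namespace MaxEntAux

variable {n : ℕ}

/-- The index set of nonempty subsets. -/
def Esets (n : ℕ) : Finset (Finset (Fin n)) :=
  (univ : Finset (Finset (Fin n))).filter (fun σ => σ ≠ ∅)

lemma mem_Esets {σ : Finset (Fin n)} : σ ∈ Esets n ↔ σ ≠ ∅ := by
  simp [Esets]

lemma bInd_eq_one_iff (C : SComplex n) (σ : Finset (Fin n)) :
    bInd C σ = 1 ↔ ∀ i ∈ σ, σ.erase i = ∅ ∨ σ.erase i ∈ C.1 := by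
  unfold bInd; split <;> simp_all

lemma aInd_eq_one_iff (C : SComplex n) (σ : Finset (Fin n)) :
    aInd C σ = 1 ↔ σ ∈ C.1 := by
  unfold aInd; split <;> simp_all

lemma aInd_eq_zero_iff (C : SComplex n) (σ : Finset (Fin n)) :
    aInd C σ = 0 ↔ σ ∉ C.1 := by
  unfold aInd; split <;> simp_all

lemma bInd_of_mem (C : SComplex n) {σ : Finset (Fin n)} (h : σ ∈ C.1) : bInd C σ = 1 := by
  rw [bInd_eq_one_iff]
  intro i hi
  rcases eq_or_ne (σ.erase i) ∅ with h0 | h0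
  · exact Or.inl h0
  · exact Or.inr (C.2.2 σ h _ (erase_subset i σ) h0)

lemma aInd_le_bInd (C : SComplex n) (σ : Finset (Fin n)) : aInd C σ ≤ bInd C σ := by
  by_cases h : σ ∈ C.1
  · rw [(aInd_eq_one_iff C σ).2 h, bInd_of_mem C h]
  · rw [(aInd_eq_zero_iff C σ).2 h]; exact Nat.zero_le _

/-- The set of "active" simplices : nonempty σ whose whole boundary lies in C. -/
def Fsets (C : SComplex n) : Finset (Finset (Fin n)) :=
  (Esets n).filter (fun σ => bInd C σ = 1)

lemma mem_Fsets {C : SComplex n} {σ : Finset (Fin n)} :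
    σ ∈ Fsets C ↔ σ ≠ ∅ ∧ bInd C σ = 1 := by
  simp [Fsets, mem_Esets, Finset.mem_filter, Esets]

lemma C_subset_Esets (C : SComplex n) : C.1 ⊆ Esets n := by
  intro σ hσ
  rw [mem_Esets]
  rintro rfl
  exact C.2.1 hσ

lemma C_subset_Fsets (C : SComplex n) : C.1 ⊆ Fsets C := by
  intro σ hσ
  rw [mem_Fsets]
  exact ⟨fun h => C.2.1 (h ▸ hσ), bInd_of_mem C hσ⟩

lemma PDelta_eq (p : Finset (Fin n) → ℝ) (C : SComplex n) :
    PDelta n p C = (∏ σ ∈ C.1, p σ) * ∏ σ ∈ Fsets C \ C.1, (1 - p σ) := by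
  have h1 : PDelta n p C
      = ∏ σ ∈ Fsets C, p σ ^ aInd C σ * (1 - p σ) ^ (bInd C σ - aInd C σ) := by
    unfold PDelta
    rw [show (univ : Finset (Finset (Fin n))).filter (fun σ => σ ≠ ∅) = Esets n from rfl]
    refine (Finset.prod_subset (Finset.filter_subset _ _) ?_).symm
    intro σ hσ hσ'
    have hb : bInd C σ ≠ 1 := by
      intro h; exact hσ' (Finset.mem_filter.2 ⟨hσ, h⟩)
    have hb0 : bInd C σ = 0 := by
      unfold bInd at hb ⊢; split <;> simp_all
    have ha0 : aInd C σ = 0 := Nat.le_zero.1 (hb0 ▸ aInd_le_bInd C σ)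
    rw [ha0, hb0]; norm_num
  rw [h1, ← Finset.prod_sdiff (C_subset_Fsets C), mul_comm]
  congr 1
  · refine Finset.prod_congr rfl fun σ hσ => ?_
    have ha : aInd C σ = 1 := (aInd_eq_one_iff C σ).2 hσ
    rw [ha, bInd_of_mem C hσ]; norm_num
  · refine Finset.prod_congr rfl fun σ hσ => ?_
    rw [Finset.mem_sdiff] at hσ
    have hb : bInd C σ = 1 := (mem_Fsets.1 hσ.1).2
    have ha : aInd C σ = 0 := (aInd_eq_zero_iff C σ).2 hσ.2
    rw [ha, hb]; norm_num

lemma PDelta_pos (p : Finset (Fin n) → ℝ) (hp : ∀ σ, p σ ∈ Set.Ioo (0:ℝ) 1)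
    (C : SComplex n) : 0 < PDelta n p C := by
  rw [PDelta_eq]
  exact mul_pos (Finset.prod_pos fun σ _ => (hp σ).1)
    (Finset.prod_pos fun σ _ => by linarith [(hp σ).2])

/-- The complex generated by a set `S` of chosen simplices. -/
def Cof (S : Finset (Finset (Fin n))) : SComplex n :=
  ⟨(univ : Finset (Finset (Fin n))).filter
      (fun σ => σ ≠ ∅ ∧ ∀ τ ⊆ σ, τ ≠ ∅ → τ ∈ S), by
    constructor
    · simp
    · intro σ hσ τ hτσ hτ
      rw [Finset.mem_filter] at hσ ⊢
      exact ⟨Finset.mem_univ _, hτ, fun ρ hρ hρ' => hσ.2.2 ρ (hρ.trans hτσ) hρ'⟩⟩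

lemma mem_Cof {S : Finset (Finset (Fin n))} {σ : Finset (Fin n)} :
    σ ∈ (Cof S).1 ↔ σ ≠ ∅ ∧ ∀ τ ⊆ σ, τ ≠ ∅ → τ ∈ S := by
  simp [Cof]

lemma Cof_eq_iff {S : Finset (Finset (Fin n))} {C : SComplex n} :
    Cof S = C ↔ S ∩ Fsets C = C.1 := by
  constructor
  · rintro rfl
    apply Finset.Subset.antisymm
    · -- S ∩ F ⊆ Cof S
      intro σ hσ
      rw [Finset.mem_inter] at hσ
      obtain ⟨hS, hF⟩ := hσ
      rw [mem_Fsets] at hF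
      rw [mem_Cof]
      refine ⟨hF.1, fun τ hτσ hτ => ?_⟩
      rcases eq_or_ne τ σ with rfl | hne
      · exact hS
      · -- τ ⊊ σ : find i ∈ σ \ τ
        have hss : τ ⊂ σ := Finset.ssubset_iff_subset_ne.2 ⟨hτσ, hne⟩
        obtain ⟨i, hiσ, hiτ⟩ := Finset.exists_of_ssubset hss
        have hτe : τ ⊆ σ.erase i := Finset.subset_erase.2 ⟨hτσ, hiτ⟩
        have hb := (bInd_eq_one_iff _ _).1 hF.2 i hiσ
        have hee : σ.erase i ≠ ∅ := by
          intro h; exact hτ (Finset.subset_empty.1 (h ▸ hτe))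
        have hei : σ.erase i ∈ (Cof S).1 := hb.resolve_left hee
        have : τ ∈ (Cof S).1 := (Cof S).2.2 _ hei τ hτe hτ
        exact (mem_Cof.1 this).2 τ (Finset.Subset.refl τ) hτ
    · -- Cof S ⊆ S ∩ F
      intro σ hσ
      have h := mem_Cof.1 hσ
      rw [Finset.mem_inter, mem_Fsets]
      exact ⟨h.2 σ (Finset.Subset.refl σ) h.1, h.1, bInd_of_mem _ hσ⟩
  · intro hSF
    have hCS : C.1 ⊆ S := by
      intro σ hσ
      have := hSF ▸ hσ
      exact (Finset.mem_inter.1 (hSF.symm ▸ hσ)).1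
    apply Subtype.ext
    apply Finset.Subset.antisymm
    · -- Cof S ⊆ C, by strong induction
      intro σ hσ
      induction σ using Finset.strongInduction with
      | _ σ ih =>
        have h := mem_Cof.1 hσ
        have hb : bInd C σ = 1 := by
          rw [bInd_eq_one_iff]
          intro i hi
          rcases eq_or_ne (σ.erase i) ∅ with h0 | h0
          · exact Or.inl h0
          · refine Or.inr (ih _ (Finset.erase_ssubset hi) (mem_Cof.2 ⟨h0, ?_⟩))
            exact fun τ hτ hτ' => h.2 τ (hτ.trans (Finset.erase_subset i σ)) hτ'
        have hσS : σ ∈ S := h.2 σ (Finset.Subset.refl σ) h.1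
        have : σ ∈ S ∩ Fsets C := Finset.mem_inter.2 ⟨hσS, mem_Fsets.2 ⟨h.1, hb⟩⟩
        exact hSF ▸ this
    · -- C ⊆ Cof S
      intro σ hσ
      rw [mem_Cof]
      refine ⟨fun h => C.2.1 (h ▸ hσ), fun τ hτσ hτ => ?_⟩
      exact hCS (C.2.2 σ hσ τ hτσ hτ)

/-- Weight of a configuration. -/
def wt (p : Finset (Fin n) → ℝ) (S : Finset (Finset (Fin n))) : ℝ :=
  (∏ σ ∈ S, p σ) * ∏ σ ∈ Esets n \ S, (1 - p σ)

lemma sum_wt (p : Finset (Fin n) → ℝ) :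
    ∑ S ∈ (Esets n).powerset, wt p S = 1 := by
  have := Finset.prod_add p (fun σ => 1 - p σ) (Esets n)
  simp only [add_sub_cancel] at this
  rw [Finset.prod_const_one] at this
  exact this.symm

lemma fiber_sum (p : Finset (Fin n) → ℝ) (C : SComplex n) :
    ∑ S ∈ (Esets n).powerset.filter (fun S => Cof S = C), wt p S
      = PDelta n p C := by
  have hCE := C_subset_Esets C
  have hCF := C_subset_Fsets C
  have hFE : Fsets C ⊆ Esets n := Finset.filter_subset _ _
  -- reindex the fiber by subsets T of Esets n \ Fsets C via T ↦ C.1 ∪ T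
  have huni : ∀ S ∈ (Esets n).powerset.filter (fun S => Cof S = C),
      C.1 ∪ (S \ Fsets C) = S := by
    intro S hS
    rw [Finset.mem_filter, Finset.mem_powerset] at hS
    have h2 := Cof_eq_iff.1 hS.2
    ext σ
    simp only [Finset.mem_union, Finset.mem_sdiff]
    constructor
    · rintro (h | h)
      · exact (Finset.mem_inter.1 (h2.symm ▸ h)).1
      · exact h.1
    · intro h
      by_cases hF : σ ∈ Fsets C
      · exact Or.inl (h2 ▸ Finset.mem_inter.2 ⟨h, hF⟩)
      · exact Or.inr ⟨h, hF⟩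
  have hre : ∑ S ∈ (Esets n).powerset.filter (fun S => Cof S = C), wt p S
      = ∑ T ∈ (Esets n \ Fsets C).powerset, wt p (C.1 ∪ T) := by
    refine Finset.sum_nbij' (fun S => S \ Fsets C) (fun T => C.1 ∪ T) ?_ ?_ huni ?_
      (fun S hS => by rw [huni S hS])
    · -- maps to
      intro S hS
      rw [Finset.mem_filter, Finset.mem_powerset] at hS
      rw [Finset.mem_powerset]
      exact Finset.sdiff_subset_sdiff hS.1 (Finset.Subset.refl _)
    · intro T hT
      rw [Finset.mem_powerset] at hT
      rw [Finset.mem_filter, Finset.mem_powerset]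
      constructor
      · exact Finset.union_subset hCE (hT.trans Finset.sdiff_subset)
      · rw [Cof_eq_iff, Finset.union_inter_distrib_right,
          Finset.inter_eq_left.2 hCF]
        have : T ∩ Fsets C = ∅ := by
          rw [← Finset.disjoint_iff_inter_eq_empty]
          exact Disjoint.mono_left hT Finset.sdiff_disjoint
        rw [this, Finset.union_empty]
    · -- right inv
      intro T hT
      rw [Finset.mem_powerset] at hT
      ext σ
      simp only [Finset.mem_sdiff, Finset.mem_union]
      constructor
      · rintro ⟨h | h, hF⟩
        · exact absurd (hCF h) hF
        · exact h
      · intro h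
        exact ⟨Or.inr h, (Finset.mem_sdiff.1 (hT h)).2⟩
  rw [hre]
  -- now compute each term
  have hterm : ∀ T ∈ (Esets n \ Fsets C).powerset,
      wt p (C.1 ∪ T) = ((∏ σ ∈ C.1, p σ) * ∏ σ ∈ Fsets C \ C.1, (1 - p σ))
        * ((∏ σ ∈ T, p σ) * ∏ σ ∈ (Esets n \ Fsets C) \ T, (1 - p σ)) := by
    intro T hT
    rw [Finset.mem_powerset] at hT
    have hdisj : Disjoint C.1 T := by
      refine Finset.disjoint_left.2 fun σ hσ hσT => ?_
      exact (Finset.mem_sdiff.1 (hT hσT)).2 (hCF hσ)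
    have hsplit : Esets n \ (C.1 ∪ T) = (Fsets C \ C.1) ∪ ((Esets n \ Fsets C) \ T) := by
      ext σ
      simp only [Finset.mem_sdiff, Finset.mem_union]
      constructor
      · rintro ⟨hE, hnot⟩
        push_neg at hnot
        by_cases hF : σ ∈ Fsets C
        · exact Or.inl ⟨hF, hnot.1⟩
        · exact Or.inr ⟨⟨hE, hF⟩, hnot.2⟩
      · rintro (⟨hF, hC⟩ | ⟨⟨hE, hF⟩, hTm⟩)
        · refine ⟨hFE hF, ?_⟩
          push_neg
          exact ⟨hC, fun hTm => (Finset.mem_sdiff.1 (hT hTm)).2 hF⟩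
        · refine ⟨hE, ?_⟩
          push_neg
          exact ⟨fun hC => hF (hCF hC), hTm⟩
    have hdisj2 : Disjoint (Fsets C \ C.1) ((Esets n \ Fsets C) \ T) := by
      refine Finset.disjoint_left.2 fun σ hσ hσ' => ?_
      exact (Finset.mem_sdiff.1 (Finset.mem_sdiff.1 hσ').1).2 (Finset.mem_sdiff.1 hσ).1
    unfold wt
    rw [Finset.prod_union hdisj, hsplit, Finset.prod_union hdisj2]
    ring
  rw [Finset.sum_congr rfl hterm, ← Finset.mul_sum]
  have : ∑ T ∈ (Esets n \ Fsets C).powerset,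
      (∏ σ ∈ T, p σ) * ∏ σ ∈ (Esets n \ Fsets C) \ T, (1 - p σ) = 1 := by
    have := Finset.prod_add p (fun σ => 1 - p σ) (Esets n \ Fsets C)
    simp only [add_sub_cancel] at this
    rw [Finset.prod_const_one] at this
    exact this.symm
  rw [this, mul_one, PDelta_eq]

lemma sum_PDelta (p : Finset (Fin n) → ℝ) :
    ∑ C : SComplex n, PDelta n p C = 1 := by
  have h := Finset.sum_fiberwise_of_maps_to
    (s := (Esets n).powerset) (t := (univ : Finset (SComplex n)))
    (g := fun S => Cof S) (fun S _ => Finset.mem_univ _) (wt p)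
  calc ∑ C : SComplex n, PDelta n p C
      = ∑ C : SComplex n, ∑ S ∈ (Esets n).powerset.filter (fun S => Cof S = C), wt p S := by
        refine Finset.sum_congr rfl fun C _ => (fiber_sum p C).symm
    _ = ∑ S ∈ (Esets n).powerset, wt p S := h
    _ = 1 := sum_wt p

end MaxEntAux
namespace MaxEntAux

variable {n : ℕ}

lemma log_PDelta (p : Finset (Fin n) → ℝ) (hp : ∀ σ, p σ ∈ Set.Ioo (0:ℝ) 1) (C : SComplex n) :
    Real.log (PDelta n p C) = ∑ σ ∈ Esets n,
      ((aInd C σ : ℝ) * Real.log (p σ)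
        + ((bInd C σ : ℝ) - (aInd C σ : ℝ)) * Real.log (1 - p σ)) := by
  have hfac : ∀ σ ∈ Esets n,
      (p σ ^ aInd C σ * (1 - p σ) ^ (bInd C σ - aInd C σ)) ≠ 0 := by
    intro σ _
    have h1 : (0:ℝ) < p σ := (hp σ).1
    have h2 : (0:ℝ) < 1 - p σ := by linarith [(hp σ).2]
    positivity
  unfold PDelta
  rw [show (univ : Finset (Finset (Fin n))).filter (fun σ => σ ≠ ∅) = Esets n from rfl]
  rw [Real.log_prod hfac]
  refine Finset.sum_congr rfl fun σ _ => ?_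
  have h1 : (0:ℝ) < p σ := (hp σ).1
  have h2 : (0:ℝ) < 1 - p σ := by linarith [(hp σ).2]
  rw [Real.log_mul (by positivity) (by positivity), Real.log_pow, Real.log_pow,
    Nat.cast_sub (aInd_le_bInd C σ)]

lemma sum_mul_log_PDelta (p : Finset (Fin n) → ℝ) (hp : ∀ σ, p σ ∈ Set.Ioo (0:ℝ) 1)
    (Q : SComplex n → ℝ) :
    ∑ C : SComplex n, Q C * Real.log (PDelta n p C)
      = ∑ σ ∈ Esets n, (Real.log (p σ) * ∑ C : SComplex n, (aInd C σ : ℝ) * Q C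
          + Real.log (1 - p σ) * ((∑ C : SComplex n, (bInd C σ : ℝ) * Q C)
              - ∑ C : SComplex n, (aInd C σ : ℝ) * Q C)) := by
  simp_rw [log_PDelta p hp, Finset.mul_sum]
  rw [Finset.sum_comm]
  refine Finset.sum_congr rfl fun σ _ => ?_
  rw [mul_sub, Finset.mul_sum, Finset.mul_sum, ← Finset.sum_sub_distrib, ← Finset.sum_add_distrib]
  refine Finset.sum_congr rfl fun C _ => ?_
  ring

lemma bInd_of_card_one {σ : Finset (Fin n)} (h : σ.card = 1) (C : SComplex n) :
    bInd C σ = 1 := by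
  rw [bInd_eq_one_iff]
  intro i hi
  left
  rw [← Finset.card_eq_zero, Finset.card_erase_of_mem hi, h]

lemma cross_entropy (p : Finset (Fin n) → ℝ) (hp : ∀ σ, p σ ∈ Set.Ioo (0:ℝ) 1)
    (P : SComplex n → ℝ) (hPsum : ∑ C, P C = 1)
    (ha : ∀ σ : Finset (Fin n), σ.Nonempty →
        ∑ C : SComplex n, (aInd C σ : ℝ) * P C =
          ∑ C : SComplex n, (aInd C σ : ℝ) * PDelta n p C)
    (hb : ∀ σ : Finset (Fin n), 2 ≤ σ.card →
        ∑ C : SComplex n, (bInd C σ : ℝ) * P C =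
          ∑ C : SComplex n, (bInd C σ : ℝ) * PDelta n p C) :
    ∑ C : SComplex n, P C * Real.log (PDelta n p C)
      = ∑ C : SComplex n, PDelta n p C * Real.log (PDelta n p C) := by
  rw [sum_mul_log_PDelta p hp P, sum_mul_log_PDelta p hp (PDelta n p)]
  refine Finset.sum_congr rfl fun σ hσ => ?_
  have hne : σ.Nonempty := Finset.nonempty_iff_ne_empty.2 (mem_Esets.1 hσ)
  have haa := ha σ hne
  have hbb : ∑ C : SComplex n, (bInd C σ : ℝ) * P C =
      ∑ C : SComplex n, (bInd C σ : ℝ) * PDelta n p C := by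
    rcases le_or_gt 2 σ.card with h2 | h2
    · exact hb σ h2
    · have h1 : σ.card = 1 := le_antisymm (by omega) (Finset.card_pos.2 hne)
      have hb1 : ∀ C : SComplex n, bInd C σ = 1 := bInd_of_card_one h1
      simp only [hb1, Nat.cast_one, one_mul]
      rw [hPsum, sum_PDelta p]
  rw [haa, hbb]

end MaxEntAux

/-- Theorem 3: `P_𝚫`, with all `p_σ ∈ (0,1)`, is a probability distribution on `𝒞_{≤n}` and
is the unique entropy maximizer among all probability distributions `P` on `𝒞_{≤n}` subject
to the constraints `E_P[a_σ] = E_{P_𝚫}[a_σ]` for every nonempty `σ` and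
`E_P[b_σ] = E_{P_𝚫}[b_σ]` for every `σ` with `|σ| ≥ 2`. -/
theorem gen_delta_is_unique_maximum_entropy
    (n : ℕ) (p : Finset (Fin n) → ℝ) (hp : ∀ σ, p σ ∈ Set.Ioo (0 : ℝ) 1) :
    (∀ C, 0 ≤ PDelta n p C) ∧ (∑ C : SComplex n, PDelta n p C = 1) ∧
    ∀ P : SComplex n → ℝ, (∀ C, 0 ≤ P C) → (∑ C, P C = 1) →
      (∀ σ : Finset (Fin n), σ.Nonempty →
        ∑ C : SComplex n, (aInd C σ : ℝ) * P C =
          ∑ C : SComplex n, (aInd C σ : ℝ) * PDelta n p C) →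
      (∀ σ : Finset (Fin n), 2 ≤ σ.card →
        ∑ C : SComplex n, (bInd C σ : ℝ) * P C =
          ∑ C : SComplex n, (bInd C σ : ℝ) * PDelta n p C) →
      (-∑ C, P C * Real.log (P C)) ≤
          (-∑ C, PDelta n p C * Real.log (PDelta n p C)) ∧
      ((-∑ C, P C * Real.log (P C)) =
          (-∑ C, PDelta n p C * Real.log (PDelta n p C)) ↔ P = PDelta n p) := by
  
  classical
  refine ⟨fun C => (MaxEntAux.PDelta_pos p hp C).le, MaxEntAux.sum_PDelta p, ?_⟩
  intro P hP hPsum ha hb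
  have hce := MaxEntAux.cross_entropy p hp P hPsum ha hb
  have hpos := MaxEntAux.PDelta_pos p hp
  -- pointwise Gibbs inequality
  have hpt : ∀ C : SComplex n,
      P C - PDelta n p C ≤ P C * Real.log (P C) - P C * Real.log (PDelta n p C) := by
    intro C
    rcases eq_or_lt_of_le (hP C) with h0 | h0
    · rw [← h0]; simp; exact (hpos C).le
    · have hd := Real.log_le_sub_one_of_pos (div_pos (hpos C) h0)
      rw [Real.log_div (hpos C).ne' h0.ne'] at hd
      have h2 := mul_le_mul_of_nonneg_left hd h0.le
      have h3 : P C * (PDelta n p C / P C - 1) = PDelta n p C - P C := by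
        field_simp
      rw [h3] at h2
      nlinarith
  have hsum_le : ∑ C : SComplex n, (P C - PDelta n p C)
      ≤ ∑ C : SComplex n, (P C * Real.log (P C) - P C * Real.log (PDelta n p C)) :=
    Finset.sum_le_sum fun C _ => hpt C
  have hL : ∑ C : SComplex n, (P C - PDelta n p C) = 0 := by
    rw [Finset.sum_sub_distrib, hPsum, MaxEntAux.sum_PDelta p]; ring
  have hR : ∑ C : SComplex n, (P C * Real.log (P C) - P C * Real.log (PDelta n p C))
      = ∑ C : SComplex n, P C * Real.log (P C)
        - ∑ C : SComplex n, PDelta n p C * Real.log (PDelta n p C) := by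
    rw [Finset.sum_sub_distrib, hce]
  have hineq : ∑ C : SComplex n, PDelta n p C * Real.log (PDelta n p C)
      ≤ ∑ C : SComplex n, P C * Real.log (P C) := by
    rw [hL, hR] at hsum_le; linarith
  constructor
  · linarith
  constructor
  · -- equality implies P = PDelta
    intro heq
    have heq' : ∑ C : SComplex n, (P C - PDelta n p C)
        = ∑ C : SComplex n, (P C * Real.log (P C) - P C * Real.log (PDelta n p C)) := by
      rw [hL, hR]; linarith
    have hall := (Finset.sum_eq_sum_iff_of_le fun C _ => hpt C).1 heq'
    funext C
    have hC := hall C (Finset.mem_univ C)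
    rcases eq_or_lt_of_le (hP C) with h0 | h0
    · exfalso
      rw [← h0] at hC
      simp at hC
      linarith [hpos C]
    · by_contra hne
      have hne' : PDelta n p C / P C ≠ 1 := by
        intro h
        rw [div_eq_one_iff_eq h0.ne'] at h
        exact hne h.symm
      have hd := Real.log_lt_sub_one_of_pos (div_pos (hpos C) h0) hne'
      rw [Real.log_div (hpos C).ne' h0.ne'] at hd
      have h2 := mul_lt_mul_of_pos_left hd h0
      have h3 : P C * (PDelta n p C / P C - 1) = PDelta n p C - P C := by
        field_simp
      rw [h3] at h2
      nlinarith
  · rintro rfl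
    rfl
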